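/- Let $A$ be a finitely generated abelian group, $p$ a prime, and suppose $(\mathbb{F}_p, S, \varphi, \delta, \rho)$ is a ubr-algorithm for $A$ (i.e. $\varphi(S)$ generates $A$, $\delta^{j+1}=\delta^j$ for some $j$, $\hat\varphi\circ\delta = \hat\varphi$, and $\hat\varphi\circ\rho = 0$, where $\hat\varphi : \mathbb{F}_p\langle S\rangle \to A \otimes \mathbb{F}_p$ is induced by $\varphi$). If $\dim_{\mathbb{F}_p} \ker\bar\rho = \mathrm{rank}\,A$, where $\bar\rho := \Delta\circ\rho|_{\mathrm{im}\,\Delta}$ with $\Delta := \delta^j$, then $A$ has no elements of order $p$. -/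

import Mathlib

open TensorProduct

/-- A surjective linear map between vector spaces (source finite-dimensional)
does not increase finrank. -/
lemma stmt7_finrank_le_of_surj {K M N : Type*} [Field K] [AddCommGroup M] [Module K M]
    [AddCommGroup N] [Module K N] [Module.Finite K M] (f : M →ₗ[K] N)
    (hf : Function.Surjective f) : Module.finrank K N ≤ Module.finrank K M := by
  have h1 : LinearMap.range f = ⊤ := LinearMap.range_eq_top.mpr hf
  have h2 := f.finrank_range_le
  rwa [h1, finrank_top] at h2

set_option maxHeartbeats 1600000 in
/-- If `(𝔽_p, S, φ, δ, ρ)` is a ubr-algorithm for the finitely generated abelian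
group `A` and its output `dim ker ρ̄` equals `rank A` (`= dim_ℚ (ℚ ⊗_ℤ A)`),
then `A` has no elements of (additive) order `p`. Here the free `𝔽_p`-vector
space on the finite set `S` is `S → ZMod p`, with basis `Pi.single s 1`. -/
theorem stmt_7 (p : ℕ) [Fact p.Prime] (S : Type*) [Fintype S] [DecidableEq S]
    (A : Type*) [AddCommGroup A] [Module.Finite ℤ A]
    (φ : S → A) (hgen : AddSubgroup.closure (Set.range φ) = ⊤)
    (φhat : (S → ZMod p) →ₗ[ZMod p] (ZMod p ⊗[ℤ] A))
    (hφhat : ∀ s : S, φhat (Pi.single s 1) = (1 : ZMod p) ⊗ₜ[ℤ] φ s)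
    (δ ρ : (S → ZMod p) →ₗ[ZMod p] (S → ZMod p)) (j : ℕ)
    (h2 : δ ^ (j + 1) = δ ^ j)
    (h3 : φhat ∘ₗ δ = φhat)
    (h4 : φhat ∘ₗ ρ = 0)
    (ρbar : LinearMap.range (δ ^ j) →ₗ[ZMod p] LinearMap.range (δ ^ j))
    (hρbar : ∀ x : LinearMap.range (δ ^ j),
      (ρbar x : S → ZMod p) = (δ ^ j) (ρ (x : S → ZMod p)))
    (hout : Module.finrank (ZMod p) (LinearMap.ker ρbar) =
      Module.finrank ℚ (ℚ ⊗[ℤ] A)) :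
    ∀ a : A, addOrderOf a = p → a = 0 := by
  intro a ha
  by_contra ha0
  exfalso
  have hp : p.Prime := Fact.out
  haveI : NeZero p := ⟨hp.pos.ne'⟩
  -- Step 1 : `φhat ∘ δ^j = φhat`
  have h3j' : ∀ m : ℕ, φhat ∘ₗ (δ ^ m : _) = φhat := by
    intro m
    induction m with
    | zero => rw [pow_zero]; ext x; simp [Module.End.one_eq_id]
    | succ m ih =>
      rw [pow_succ, Module.End.mul_eq_comp, ← LinearMap.comp_assoc, ih, h3]
  have h3j := h3j' j
  -- Step 2 : `φhat` is surjective
  have hsurj : Function.Surjective φhat := by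
    have key : ∀ b : A, (1 : ZMod p) ⊗ₜ[ℤ] b ∈ LinearMap.range φhat := by
      have hle : (⊤ : AddSubgroup A) ≤
          AddSubgroup.comap ((TensorProduct.mk ℤ (ZMod p) A 1).toAddMonoidHom)
            (LinearMap.range φhat).toAddSubgroup := by
        rw [← hgen]
        apply AddSubgroup.closure_le _ |>.mpr
        rintro _ ⟨s, rfl⟩
        exact ⟨Pi.single s 1, hφhat s⟩
      intro b
      exact hle (AddSubgroup.mem_top b)
    intro x
    induction x using TensorProduct.induction_on with
    | zero => exact ⟨0, map_zero _⟩
    | tmul r b =>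
      obtain ⟨v, hv⟩ := key b
      exact ⟨r • v, by rw [map_smul, hv, TensorProduct.smul_tmul', smul_eq_mul, mul_one]⟩
    | add x y hx hy =>
      obtain ⟨u, hu⟩ := hx; obtain ⟨v, hv⟩ := hy
      exact ⟨u + v, by rw [map_add, hu, hv]⟩
  -- Step 3 : the restriction of `φhat` to `W = range (δ^j)` is surjective,
  -- and kills the range of `ρbar`.
  let f : LinearMap.range (δ ^ j : _) →ₗ[ZMod p] (ZMod p ⊗[ℤ] A) :=
    φhat ∘ₗ (LinearMap.range (δ ^ j : _)).subtype
  have hfsurj : Function.Surjective f := by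
    intro y
    obtain ⟨x, hx⟩ := hsurj y
    refine ⟨⟨(δ ^ j : _) x, ⟨x, rfl⟩⟩, ?_⟩
    show φhat ((δ ^ j : _) x) = y
    rw [← LinearMap.comp_apply, h3j]; exact hx
  have hker : LinearMap.range ρbar ≤ LinearMap.ker f := by
    rintro _ ⟨x, rfl⟩
    show φhat ((ρbar x : S → ZMod p)) = 0
    rw [hρbar, ← LinearMap.comp_apply φhat, h3j, ← LinearMap.comp_apply, h4,
      LinearMap.zero_apply]
  -- Step 4 : `finrank (ZMod p) (ZMod p ⊗ A) ≤ finrank ℚ (ℚ ⊗ A)`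
  have e1 := LinearMap.finrank_range_add_finrank_ker f
  have e2 := LinearMap.finrank_range_add_finrank_ker ρbar
  have e3 : Module.finrank (ZMod p) (LinearMap.range f) =
      Module.finrank (ZMod p) (ZMod p ⊗[ℤ] A) := by
    rw [LinearMap.range_eq_top.mpr hfsurj, finrank_top]
  have e4 : Module.finrank (ZMod p) (LinearMap.range ρbar) ≤
      Module.finrank (ZMod p) (LinearMap.ker f) := Submodule.finrank_mono hker
  have upper : Module.finrank (ZMod p) (ZMod p ⊗[ℤ] A) ≤
      Module.finrank ℚ (ℚ ⊗[ℤ] A) := by omega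
  -- Step 5 : structure theorem
  haveI : AddGroup.FG A := Module.Finite.iff_addGroup_fg.mp ‹Module.Finite ℤ A›
  obtain ⟨n, ι, fι, q, hq, k, ⟨e⟩⟩ := AddCommGroup.equiv_free_prod_directSum_zmod A
  haveI : DecidableEq ι := Classical.decEq ι
  haveI : ∀ i, NeZero (q i ^ k i) := fun i => ⟨pow_ne_zero _ (hq i).pos.ne'⟩
  let eℤ : A ≃ₗ[ℤ] (Fin n →₀ ℤ) × (DirectSum ι fun i => ZMod (q i ^ k i)) :=
    e.toIntLinearEquiv
  -- Step 6 : `finrank ℚ (ℚ ⊗ A) = n`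
  have hrank : Module.finrank ℚ (ℚ ⊗[ℤ] A) = n := by
    -- lower bound via a surjection `ℚ ⊗ A → (Fin n →₀ ℚ)`
    let cast₁ : ℤ →ₗ[ℤ] ℚ := (Int.castAddHom ℚ).toIntLinearMap
    let hA : A →ₗ[ℤ] (Fin n →₀ ℚ) :=
      (Finsupp.mapRange.linearMap cast₁) ∘ₗ ((LinearMap.fst ℤ _ _) ∘ₗ eℤ.toLinearMap)
    let hhat : ℚ ⊗[ℤ] A →ₗ[ℚ] (Fin n →₀ ℚ) := hA.liftBaseChange ℚ
    have hhsurj : Function.Surjective hhat := by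
      intro u
      induction u using Finsupp.induction_linear with
      | zero => exact ⟨0, map_zero _⟩
      | add f g hf hg =>
        obtain ⟨x, hx⟩ := hf; obtain ⟨y, hy⟩ := hg
        exact ⟨x + y, by rw [map_add, hx, hy]⟩
      | single i c =>
        refine ⟨c ⊗ₜ (eℤ.symm (Finsupp.single i 1, 0)), ?_⟩
        rw [LinearMap.liftBaseChange_tmul]
        simp [hhat, hA, cast₁, Finsupp.smul_single]
    have hle1 : n ≤ Module.finrank ℚ (ℚ ⊗[ℤ] A) := by
      have := stmt7_finrank_le_of_surj hhat hhsurj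
      rwa [Module.finrank_finsupp_self, Fintype.card_fin] at this
    -- upper bound via a surjection `ℚ ⊗ (Fin n →₀ ℤ) → ℚ ⊗ A`
    let incl : (Fin n →₀ ℤ) →ₗ[ℤ] A := eℤ.symm.toLinearMap ∘ₗ LinearMap.inl ℤ _ _
    let t : ℚ ⊗[ℤ] (Fin n →₀ ℤ) →ₗ[ℚ] ℚ ⊗[ℤ] A := incl.baseChange ℚ
    have ht : Function.Surjective t := by
      intro x
      induction x using TensorProduct.induction_on with
      | zero => exact ⟨0, map_zero _⟩
      | add x y hx hy =>
        obtain ⟨u, hu⟩ := hx; obtain ⟨v, hv⟩ := hy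
        exact ⟨u + v, by rw [map_add, hu, hv]⟩
      | tmul r b =>
        refine ⟨r ⊗ₜ (eℤ b).1, ?_⟩
        have hsplit : b = eℤ.symm ((eℤ b).1, 0) + eℤ.symm (0, (eℤ b).2) := by
          rw [← map_add]
          simp
        have hzero : r ⊗ₜ[ℤ] (eℤ.symm (0, (eℤ b).2)) = (0 : ℚ ⊗[ℤ] A) := by
          set d := (eℤ b).2 with hd
          set m : ℕ := ∏ i, q i ^ k i with hm
          have hmpos : 0 < m := Finset.prod_pos fun i _ => pow_pos (hq i).pos _
          have hmd : (m : ℤ) • d = 0 := by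
            refine DFinsupp.ext fun i => ?_
            rw [DFinsupp.smul_apply]
            have hdvd' : ((q i ^ k i : ℕ) : ℤ) ∣ (m : ℤ) :=
              Int.natCast_dvd_natCast.mpr (Finset.dvd_prod_of_mem _ (Finset.mem_univ i))
            have : ((m : ℤ) : ZMod (q i ^ k i)) = 0 := by
              rw [Int.cast_natCast, ZMod.natCast_eq_zero_iff]
              exact Finset.dvd_prod_of_mem _ (Finset.mem_univ i)
            rw [zsmul_eq_mul, this, zero_mul]
            simp
          have hsm : (m : ℤ) • eℤ.symm (0, d) = 0 := by
            rw [← map_smul, Prod.smul_mk, smul_zero, hmd]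
            simp
          have hmQ : ((m : ℚ)) ≠ 0 := by exact_mod_cast hmpos.ne'
          calc r ⊗ₜ[ℤ] eℤ.symm (0, d)
              = ((r / m) * m) ⊗ₜ[ℤ] eℤ.symm (0, d) := by rw [div_mul_cancel₀ _ hmQ]
            _ = (r / m) • (((m : ℚ)) ⊗ₜ[ℤ] eℤ.symm (0, d)) := by
                rw [TensorProduct.smul_tmul', smul_eq_mul]
            _ = (r / m) • ((((m : ℤ)) • (1 : ℚ)) ⊗ₜ[ℤ] eℤ.symm (0, d)) := by
                norm_num [zsmul_eq_mul]
            _ = (r / m) • ((1 : ℚ) ⊗ₜ[ℤ] (((m : ℤ)) • eℤ.symm (0, d))) := by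
                rw [TensorProduct.smul_tmul]
            _ = 0 := by rw [hsm, tmul_zero, smul_zero]
        rw [LinearMap.baseChange_tmul]
        conv_rhs => rw [hsplit, tmul_add, hzero, add_zero]
        simp [incl]
    have hle2 : Module.finrank ℚ (ℚ ⊗[ℤ] A) ≤ n := by
      have h5 := stmt7_finrank_le_of_surj t ht
      have h6 : Module.finrank ℚ (ℚ ⊗[ℤ] (Fin n →₀ ℤ)) = n := by
        rw [Module.finrank_baseChange, Module.finrank_finsupp_self, Fintype.card_fin]
      rwa [h6] at h5
    omega
  -- Step 7 : locate an index with `p ∣ q i₀ ^ k i₀`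
  obtain ⟨i₀, hdvd⟩ : ∃ i, p ∣ q i ^ k i := by
    have hpa : p • a = 0 := by rw [← ha]; exact addOrderOf_nsmul_eq_zero a
    have hea : p • e a = 0 := by rw [← map_nsmul, hpa, map_zero]
    have hu : (e a).1 = 0 := by
      have h1 : p • (e a).1 = 0 := by rw [← Prod.smul_fst, hea]; rfl
      ext i
      have := congrFun (congrArg (⇑) h1) i
      simp only [Finsupp.coe_smul, Pi.smul_apply, smul_eq_mul, Finsupp.coe_zero,
        Pi.zero_apply, nsmul_eq_mul] at this ⊢
      exact by
        rcases mul_eq_zero.mp this with h | h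
        · exact absurd (by exact_mod_cast h) hp.ne_zero
        · exact h
    have hb : (e a).2 ≠ 0 := by
      intro h
      apply ha0
      have : e a = 0 := Prod.ext hu h
      simpa using e.injective (by simpa using this)
    obtain ⟨i₀, hi₀⟩ : ∃ i, (e a).2 i ≠ 0 := by
      by_contra h
      push_neg at h
      exact hb (DFinsupp.ext h)
    refine ⟨i₀, ?_⟩
    have hpb : p • ((e a).2 i₀) = 0 := by
      have h2' : p • (e a).2 = 0 := by rw [← Prod.smul_snd, hea]; rfl
      calc p • ((e a).2 i₀) = (p • (e a).2) i₀ := by rw [DFinsupp.smul_apply]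
        _ = 0 := by rw [h2']; rfl
    have hdvd1 : addOrderOf ((e a).2 i₀) ∣ p := addOrderOf_dvd_of_nsmul_eq_zero hpb
    have hne1 : addOrderOf ((e a).2 i₀) ≠ 1 := by
      simpa [AddMonoid.addOrderOf_eq_one_iff] using hi₀
    have horder : addOrderOf ((e a).2 i₀) = p :=
      ((hp.eq_one_or_self_of_dvd _ hdvd1).resolve_left hne1)
    have hdvd2 : addOrderOf ((e a).2 i₀) ∣ q i₀ ^ k i₀ := by
      have := addOrderOf_dvd_card (x := (e a).2 i₀)
      rwa [ZMod.card] at this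
    rwa [horder] at hdvd2
  -- Step 8 : `finrank (ZMod p) (ZMod p ⊗ A) ≥ n + 1`
  have lower : n + 1 ≤ Module.finrank (ZMod p) (ZMod p ⊗[ℤ] A) := by
    let cast₂ : ℤ →ₗ[ℤ] ZMod p := (Int.castAddHom (ZMod p)).toIntLinearMap
    let l₁ : ((Fin n →₀ ℤ) × (DirectSum ι fun i => ZMod (q i ^ k i))) →ₗ[ℤ]
        (Fin n →₀ ZMod p) := (Finsupp.mapRange.linearMap cast₂) ∘ₗ LinearMap.fst ℤ _ _
    let l₂ : ((Fin n →₀ ℤ) × (DirectSum ι fun i => ZMod (q i ^ k i))) →ₗ[ℤ] ZMod p :=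
      ((ZMod.castHom hdvd (ZMod p)).toAddMonoidHom.toIntLinearMap) ∘ₗ
        ((DirectSum.component ℤ ι _ i₀) ∘ₗ LinearMap.snd ℤ _ _)
    let g : A →ₗ[ℤ] ((Fin n →₀ ZMod p) × ZMod p) :=
      (LinearMap.prod l₁ l₂) ∘ₗ eℤ.toLinearMap
    let ghat : ZMod p ⊗[ℤ] A →ₗ[ZMod p] ((Fin n →₀ ZMod p) × ZMod p) :=
      g.liftBaseChange (ZMod p)
    have mem1 : ∀ v : Fin n →₀ ZMod p,
        ((v, 0) : (Fin n →₀ ZMod p) × ZMod p) ∈ LinearMap.range ghat := by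
      intro v
      induction v using Finsupp.induction_linear with
      | zero => exact zero_mem _
      | add f g hf hg => simpa using add_mem hf hg
      | single i c =>
        refine ⟨c ⊗ₜ (eℤ.symm (Finsupp.single i 1, 0)), ?_⟩
        rw [LinearMap.liftBaseChange_tmul]
        simp [ghat, g, l₁, l₂, cast₂, Prod.smul_mk, Finsupp.smul_single]
    have mem2 : ∀ z : ZMod p,
        ((0, z) : (Fin n →₀ ZMod p) × ZMod p) ∈ LinearMap.range ghat := by
      intro z
      refine ⟨(1 : ZMod p) ⊗ₜ
        (eℤ.symm (0, DirectSum.of _ i₀ ((z.val : ZMod (q i₀ ^ k i₀))))), ?_⟩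
      rw [LinearMap.liftBaseChange_tmul, one_smul]
      have hcomp : (DirectSum.component ℤ ι (fun i => ZMod (q i ^ k i)) i₀)
          (DirectSum.of _ i₀ ((z.val : ZMod (q i₀ ^ k i₀)))) =
          (z.val : ZMod (q i₀ ^ k i₀)) := DirectSum.component.lof_self ℤ i₀ _
      have h8 : (ZMod.castHom hdvd (ZMod p)) ((z.val : ℕ) : ZMod (q i₀ ^ k i₀)) = z := by
        rw [map_natCast]; exact ZMod.natCast_rightInverse z
      simp [ghat, g, l₁, l₂, hcomp, h8, -ZMod.natCast_val]
    have hsurjg : Function.Surjective ghat := by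
      intro w
      obtain ⟨x1, h1⟩ := mem1 w.1
      obtain ⟨x2, h2⟩ := mem2 w.2
      exact ⟨x1 + x2, by rw [map_add, h1, h2]; simp⟩
    have h7 := stmt7_finrank_le_of_surj ghat hsurjg
    have hV : Module.finrank (ZMod p) ((Fin n →₀ ZMod p) × ZMod p) = n + 1 := by
      rw [Module.finrank_prod, Module.finrank_finsupp_self, Fintype.card_fin,
        Module.finrank_self]
    omega
  omega
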